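/- Let t : Fin n → A × B with n ≥ 1 model a bag relation with counts c(a,b). The maximum, over all multiplicity functions m : A × B → ℕ such that m(a,b) ≤ c(a,b) for all (a,b) and such that for each a there is at most one b with m(a,b) > 0, of the total size Σ_{(a,b)} m(a,b), equals Σ_{a ∈ dom_X} max_b c(a,b), where dom_X is the image of i ↦ (t i).1. Consequently g₃(t) := (that maximum)/n = Σ_a p₁(a) · max_b p(b∣a). (Equivalent formula for the measure g₃.) -/

import Mathlib

namespace AFD

open Finset

variable {A B : Type*}

/-- Number of indices with X-value `a`. -/
def c1 {n : ℕ} [DecidableEq A] (t : Fin n → A × B) (a : A) : ℕ :=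
  (Finset.univ.filter fun i => (t i).1 = a).card

/-- Number of indices with Y-value `b`. -/
def c2 {n : ℕ} [DecidableEq B] (t : Fin n → A × B) (b : B) : ℕ :=
  (Finset.univ.filter fun i => (t i).2 = b).card

/-- Number of indices with tuple value `(a, b)`. -/
def cnt {n : ℕ} [DecidableEq A] [DecidableEq B] (t : Fin n → A × B) (a : A) (b : B) : ℕ :=
  (Finset.univ.filter fun i => t i = (a, b)).card

/-- Marginal probability of X-value `a`. -/
noncomputable def p1 {n : ℕ} [DecidableEq A] (t : Fin n → A × B) (a : A) : ℝ :=
  (c1 t a : ℝ) / n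

/-- Marginal probability of Y-value `b`. -/
noncomputable def p2 {n : ℕ} [DecidableEq B] (t : Fin n → A × B) (b : B) : ℝ :=
  (c2 t b : ℝ) / n

/-- Joint probability of `(a, b)`. -/
noncomputable def pJ {n : ℕ} [DecidableEq A] [DecidableEq B] (t : Fin n → A × B)
    (a : A) (b : B) : ℝ :=
  (cnt t a b : ℝ) / n

/-- Conditional probability of Y-value `b` given X-value `a` (with the `0/0 = 0` convention,
which is automatic for real division in Lean). -/
noncomputable def pC {n : ℕ} [DecidableEq A] [DecidableEq B] (t : Fin n → A × B)
    (a : A) (b : B) : ℝ :=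
  pJ t a b / p1 t a

/-- The set of distinct X-values. -/
def domX {n : ℕ} [DecidableEq A] (t : Fin n → A × B) : Finset A :=
  Finset.univ.image fun i => (t i).1

/-- The set of distinct Y-values. -/
def domY {n : ℕ} [DecidableEq B] (t : Fin n → A × B) : Finset B :=
  Finset.univ.image fun i => (t i).2

/-- The set of distinct tuples. -/
def domXY {n : ℕ} [DecidableEq A] [DecidableEq B] (t : Fin n → A × B) : Finset (A × B) :=
  Finset.univ.image t

/-- The probabilistic dependency `pdep(X → Y)`. -/
noncomputable def pdep {n : ℕ} [DecidableEq A] [DecidableEq B] (t : Fin n → A × B) : ℝ :=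
  ∑ a ∈ domX t, p1 t a * ∑ b ∈ domY t, (pC t a b) ^ 2

/-- The probabilistic self-dependency `pdep(Y)`. -/
noncomputable def pdepY {n : ℕ} [DecidableEq B] (t : Fin n → A × B) : ℝ :=
  ∑ b ∈ domY t, (p2 t b) ^ 2

/-- The (X;Y)-permutation of `t` induced by the permutation `σ`. -/
def permRel {n : ℕ} (t : Fin n → A × B) (σ : Equiv.Perm (Fin n)) : Fin n → A × B :=
  fun i => ((t i).1, (t (σ i)).2)

/-- `t` satisfies the functional dependency X → Y. -/
def satFD {n : ℕ} (t : Fin n → A × B) : Prop :=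
  ∀ i j, (t i).1 = (t j).1 → (t i).2 = (t j).2

section Aux
variable {A B : Type*} [DecidableEq A] [DecidableEq B] {n : ℕ}

lemma cnt_pos_mem_domXY (t : Fin n → A × B) {a : A} {b : B}
    (h : 0 < cnt t a b) : (a, b) ∈ domXY t := by
  obtain ⟨i, hi⟩ := Finset.card_pos.mp h
  simp only [Finset.mem_filter] at hi
  exact hi.2 ▸ Finset.mem_image_of_mem t (Finset.mem_univ i)

lemma cnt_eq_zero_of_not_mem (t : Fin n → A × B) {ab : A × B}
    (h : ab ∉ domXY t) : cnt t ab.1 ab.2 = 0 := by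
  by_contra hc
  exact h (cnt_pos_mem_domXY t (Nat.pos_of_ne_zero hc))

lemma domXY_subset (t : Fin n → A × B) : domXY t ⊆ domX t ×ˢ domY t := by
  intro ab hab
  simp only [domXY, Finset.mem_image] at hab
  obtain ⟨i, -, hi⟩ := hab
  subst hi
  exact Finset.mem_product.mpr ⟨Finset.mem_image_of_mem _ (Finset.mem_univ i),
    Finset.mem_image_of_mem _ (Finset.mem_univ i)⟩

lemma c1_pos_of_mem (t : Fin n → A × B) {a : A} (ha : a ∈ domX t) :
    0 < c1 t a := by
  simp only [domX, Finset.mem_image] at ha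
  obtain ⟨i, -, hi⟩ := ha
  exact Finset.card_pos.mpr ⟨i, Finset.mem_filter.mpr ⟨Finset.mem_univ i, hi⟩⟩

lemma sup_pos_of_mem (t : Fin n → A × B) {a : A} (ha : a ∈ domX t) :
    0 < (domY t).sup fun b => cnt t a b := by
  simp only [domX, Finset.mem_image] at ha
  obtain ⟨i, -, hi⟩ := ha
  have hb : (t i).2 ∈ domY t := Finset.mem_image_of_mem _ (Finset.mem_univ i)
  have hcnt : 0 < cnt t a (t i).2 := by
    refine Finset.card_pos.mpr ⟨i, Finset.mem_filter.mpr ⟨Finset.mem_univ i, ?_⟩⟩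
    exact Prod.ext hi rfl
  exact lt_of_lt_of_le hcnt (Finset.le_sup hb)

end Aux

/-- Equivalent formula for the measure g₃: the maximum size of a subrelation satisfying
the FD X→Y equals `∑_{a ∈ dom_X} max_b c(a,b)`, and consequently
`g₃(t) = ∑_a p₁(a) · max_b p(b∣a)`. -/
theorem g3_eq_sum_sup {A B : Type*} [DecidableEq A] [DecidableEq B]
    {n : ℕ} (hn : 1 ≤ n) (t : Fin n → A × B) :
    IsGreatest
      {s : ℕ | ∃ m : A × B → ℕ,
        (∀ a b, m (a, b) ≤ cnt t a b) ∧
        (∀ a b b', 0 < m (a, b) → 0 < m (a, b') → b = b') ∧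
        s = ∑ ab ∈ domXY t, m ab}
      (∑ a ∈ domX t, (domY t).sup fun b => cnt t a b) ∧
    ((∑ a ∈ domX t, (domY t).sup fun b => cnt t a b : ℕ) : ℝ) / n =
      ∑ a ∈ domX t, p1 t a *
        (domY t).sup'
          ⟨(t ⟨0, hn⟩).2, by exact Finset.mem_image_of_mem _ (Finset.mem_univ _)⟩
          (fun b => pC t a b) := by
  have hnY : (domY t).Nonempty := ⟨(t ⟨0, hn⟩).2, Finset.mem_image_of_mem _ (Finset.mem_univ _)⟩
  have hnR : (0:ℝ) < n := by positivity
  -- sum over domXY equals sum over product, for any m ≤ cnt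
  have key : ∀ m : A × B → ℕ, (∀ a b, m (a, b) ≤ cnt t a b) →
      ∑ ab ∈ domXY t, m ab = ∑ a ∈ domX t, ∑ b ∈ domY t, m (a, b) := by
    intro m hm
    rw [← Finset.sum_product]
    refine Finset.sum_subset (domXY_subset t) ?_
    intro ab _ hab
    have := hm ab.1 ab.2
    rw [cnt_eq_zero_of_not_mem t hab] at this
    simpa using Nat.le_zero.mp this
  constructor
  · constructor
    · -- membership: construct the optimal m
      have hch : ∀ a, ∃ b, a ∈ domX t →
          b ∈ domY t ∧ ((domY t).sup fun b => cnt t a b) = cnt t a b := by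
        intro a
        obtain ⟨b, hb, hsup⟩ := Finset.exists_mem_eq_sup (domY t) hnY (fun b => cnt t a b)
        exact ⟨b, fun _ => ⟨hb, hsup⟩⟩
      choose ch hch using hch
      refine ⟨fun ab => if ab.1 ∈ domX t ∧ ab.2 = ch ab.1 then cnt t ab.1 ab.2 else 0,
        ?_, ?_, ?_⟩
      · intro a b; dsimp only; split <;> simp
      · intro a b b' hb hb'
        dsimp only at hb hb'
        split_ifs at hb hb' with h1 h2
        · exact h1.2.trans h2.2.symm
        all_goals simp_all
      · simp only []
        rw [key _ (by intro a b; dsimp only; split <;> simp)]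
        refine Finset.sum_congr rfl fun a ha => ?_
        obtain ⟨hbY, hsup⟩ := hch a ha
        rw [hsup]
        rw [Finset.sum_congr rfl (fun b _ => by simp [ha] : ∀ b ∈ domY t,
          (if (a, b).1 ∈ domX t ∧ (a, b).2 = ch (a, b).1 then cnt t (a,b).1 (a,b).2 else 0)
            = if b = ch a then cnt t a b else 0)]
        rw [Finset.sum_ite_eq' (domY t) (ch a) (cnt t a)]
        simp [hbY]
    · -- upper bound
      rintro s ⟨m, hle, huniq, rfl⟩
      rw [key m hle]
      refine Finset.sum_le_sum fun a ha => ?_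
      by_cases hpos : ∃ b ∈ domY t, 0 < m (a, b)
      · obtain ⟨b₀, hb₀, hpos⟩ := hpos
        have : ∑ b ∈ domY t, m (a, b) = m (a, b₀) := by
          refine Finset.sum_eq_single_of_mem b₀ hb₀ fun b _ hne => ?_
          by_contra h
          exact hne (huniq a b b₀ (Nat.pos_of_ne_zero h) hpos)
        rw [this]
        exact le_trans (hle a b₀) (Finset.le_sup hb₀)
      · push_neg at hpos
        have : ∑ b ∈ domY t, m (a, b) = 0 :=
          Finset.sum_eq_zero fun b hb => Nat.le_zero.mp (hpos b hb)
        simp [this]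
  · -- the real-valued identity
    rw [Nat.cast_sum, Finset.sum_div]
    refine Finset.sum_congr rfl fun a ha => ?_
    have hc1 : (0:ℝ) < c1 t a := by exact_mod_cast c1_pos_of_mem t ha
    have hpC : ∀ b, pC t a b = (cnt t a b : ℝ) / c1 t a := by
      intro b
      unfold pC pJ p1
      have h1 : (n:ℝ) ≠ 0 := ne_of_gt hnR
      have h2 : (c1 t a : ℝ) ≠ 0 := ne_of_gt hc1
      field_simp
    have hsup' : (domY t).sup' hnY (fun b => pC t a b)
        = ((domY t).sup fun b => cnt t a b : ℕ) / (c1 t a : ℝ) := by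
      apply le_antisymm
      · refine Finset.sup'_le _ _ fun b hb => ?_
        rw [hpC]
        gcongr
        exact_mod_cast Finset.le_sup hb
      · obtain ⟨b₀, hb₀, hsup⟩ := Finset.exists_mem_eq_sup (domY t) hnY (fun b => cnt t a b)
        rw [hsup]
        exact le_trans (le_of_eq (hpC b₀).symm) (Finset.le_sup' _ hb₀)
    rw [hsup', p1]
    field_simp


end AFD
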